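/- For any k ≥ 3, there are arbitrarily large values of d for which there exists a group G and a symmetric generating set S with |S| = d such that the Cayley graph Cay(G,S) has diameter at most k and |G| ≥ (1/k)·( (k/(2k+4))·( d + k·log₂(d/2) − log₂log₂ d − log₂(8k²) ) )^k. -/

import Mathlib

open Real

namespace CayCon

variable (k m : ℕ)

/-- The modulus `M = k²m`. -/
abbrev MM : ℕ := k * k * m

/-- The underlying type of the group `Γ = (ZMod M)^{ZMod k} ⋊ ZMod k`. -/
structure Gr (k m : ℕ) where
  v : ZMod k → ZMod (MM k m)
  r : ZMod k

lemma Gr.ext' {a b : Gr k m} (h1 : a.v = b.v) (h2 : a.r = b.r) : a = b := by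
  cases a; cases b; simp_all

/-- shift of a vector by `j`. -/
def shf (j : ZMod k) (w : ZMod k → ZMod (MM k m)) : ZMod k → ZMod (MM k m) :=
  fun c => w (c - j)

instance : Mul (Gr k m) := ⟨fun a b => ⟨a.v + shf k m a.r b.v, a.r + b.r⟩⟩
instance : One (Gr k m) := ⟨⟨0, 0⟩⟩
instance : Inv (Gr k m) := ⟨fun a => ⟨-(shf k m (-a.r) a.v), -a.r⟩⟩

lemma mul_def (a b : Gr k m) : a * b = ⟨a.v + shf k m a.r b.v, a.r + b.r⟩ := rfl
lemma one_def : (1 : Gr k m) = ⟨0, 0⟩ := rfl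
lemma inv_def (a : Gr k m) : a⁻¹ = ⟨-(shf k m (-a.r) a.v), -a.r⟩ := rfl

instance : Group (Gr k m) :=
  Group.ofLeftAxioms
    (by
      intro a b c
      refine Gr.ext' k m ?_ (add_assoc _ _ _)
      funext x
      simp [mul_def, shf, Pi.add_apply, add_assoc, sub_sub])
    (by
      intro a
      refine Gr.ext' k m ?_ (zero_add _)
      funext x
      simp [mul_def, one_def, shf, Pi.add_apply])
    (by
      intro a
      refine Gr.ext' k m ?_ (neg_add_cancel _)
      funext x
      simp [mul_def, one_def, inv_def, shf, Pi.add_apply, sub_neg_eq_add])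

def grEquiv : Gr k m ≃ ((ZMod k → ZMod (MM k m)) × ZMod k) where
  toFun g := (g.v, g.r)
  invFun p := ⟨p.1, p.2⟩
  left_inv g := rfl
  right_inv p := rfl

noncomputable instance [NeZero k] [NeZero (MM k m)] : Fintype (Gr k m) :=
  Fintype.ofEquiv _ (grEquiv k m).symm

/-- cast down to `ZMod k²`. -/
def cst : ZMod (MM k m) →+* ZMod (k * k) := ZMod.castHom ⟨m, rfl⟩ _

section psi
variable [NeZero k]

lemma modk_mul_k (x : ℕ) :
    ((x % k : ℕ) : ZMod (k * k)) * k = (x : ZMod (k * k)) * k := by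
  have h0 : ((k : ZMod (k * k)) * k) = 0 := by
    rw [← Nat.cast_mul, ZMod.natCast_self]
  conv_rhs => rw [← Nat.div_add_mod x k]
  push_cast
  linear_combination (-((x / k : ℕ) : ZMod (k * k))) * h0

/-- The homomorphism with kernel our group. -/
noncomputable def psi : Gr k m →* Multiplicative (ZMod (k * k)) where
  toFun g := Multiplicative.ofAdd
    (cst k m (∑ c, g.v c) - (g.r.val : ZMod (k * k)) * k)
  map_one' := by
    simp [one_def, ZMod.val_zero]
  map_mul' a b := by
    have hsum : ∑ c, (a * b).v c = (∑ c, a.v c) + ∑ c, b.v c := by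
      rw [show (a * b).v = a.v + shf k m a.r b.v from rfl]
      simp only [Pi.add_apply, Finset.sum_add_distrib]
      congr 1
      exact Equiv.sum_comp (Equiv.subRight a.r) b.v
    have hval : (((a * b).r.val : ℕ) : ZMod (k * k)) * k
        = ((a.r.val : ZMod (k * k))) * k + ((b.r.val : ZMod (k * k))) * k := by
      rw [show (a * b).r = a.r + b.r from rfl, ZMod.val_add, modk_mul_k]
      push_cast
      ring
    show Multiplicative.ofAdd _ = Multiplicative.ofAdd _ * Multiplicative.ofAdd _
    rw [← ofAdd_add]
    congr 1
    rw [hsum, map_add, hval]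
    ring

lemma psi_apply (g : Gr k m) : psi k m g
    = Multiplicative.ofAdd (cst k m (∑ c, g.v c) - (g.r.val : ZMod (k * k)) * k) := rfl

lemma psi_eq_one_iff (g : Gr k m) :
    psi k m g = 1 ↔ cst k m (∑ c, g.v c) = (g.r.val : ZMod (k * k)) * k := by
  rw [psi_apply, ofAdd_eq_one, sub_eq_zero]

end psi

section gens
variable [NeZero k]

/-- correction term -/
def kap (x : ZMod (MM k m)) : ZMod (MM k m) :=
  (((k : ZMod (k * k)) - cst k m x).val : ZMod (MM k m))

lemma cst_natCast (n : ℕ) : cst k m ((n : ℕ) : ZMod (MM k m)) = (n : ZMod (k * k)) :=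
  map_natCast _ n

lemma cst_kap (x : ZMod (MM k m)) :
    cst k m (kap k m x) = (k : ZMod (k * k)) - cst k m x := by
  unfold kap
  rw [cst_natCast]
  simp [ZMod.natCast_val, ZMod.cast_id]

/-- the basic generators -/
def agen (x : ZMod (MM k m)) : Gr k m :=
  ⟨Pi.single (1 : ZMod k) x + Pi.single (2 : ZMod k) (kap k m x), 1⟩

/-- the special generators -/
def bgen (j : ZMod k) (t : ZMod (MM k m)) : Gr k m :=
  ⟨Pi.single j t + Pi.single (j + 1) ((j.val * k : ℕ) : ZMod (MM k m)), j⟩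

lemma sum_single (a : ZMod k) (y : ZMod (MM k m)) : ∑ c, Pi.single a y c = y := by
  classical
  rw [show (∑ c, Pi.single a y c) = ∑ c, if c = a then y else 0 from
    Finset.sum_congr rfl (fun c _ => by rw [Pi.single_apply])]
  simp

lemma psi_agen (hk : 3 ≤ k) (x : ZMod (MM k m)) : psi k m (agen k m x) = 1 := by
  haveI : Fact (1 < k) := ⟨by omega⟩
  have hsum : ∑ c, (agen k m x).v c = x + kap k m x := by
    rw [show (agen k m x).v = Pi.single (1 : ZMod k) x + Pi.single (2 : ZMod k) (kap k m x) from rfl]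
    simp only [Pi.add_apply, Finset.sum_add_distrib, sum_single]
  rw [psi_eq_one_iff, ← sub_eq_zero]
  rw [hsum, map_add, cst_kap]
  rw [show (agen k m x).r = 1 from rfl, ZMod.val_one]
  push_cast
  ring

lemma psi_bgen (j : ZMod k) (t : ZMod (MM k m)) (ht : cst k m t = 0) :
    psi k m (bgen k m j t) = 1 := by
  have hsum : ∑ c, (bgen k m j t).v c = t + ((j.val * k : ℕ) : ZMod (MM k m)) := by
    rw [show (bgen k m j t).v
      = Pi.single j t + Pi.single (j+1) ((j.val * k : ℕ) : ZMod (MM k m)) from rfl]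
    simp only [Pi.add_apply, Finset.sum_add_distrib, sum_single]
  rw [psi_eq_one_iff, ← sub_eq_zero]
  rw [hsum, map_add, cst_natCast, ht]
  rw [show (bgen k m j t).r = j from rfl]
  push_cast
  ring

end gens

section word
variable [NeZero k]

lemma natCast_eq_iff (i : ℕ) (hi : i < k) (z : ZMod k) :
    ((i : ℕ) : ZMod k) = z ↔ i = z.val := by
  constructor
  · rintro rfl
    rw [ZMod.val_natCast, Nat.mod_eq_of_lt hi]
  · rintro rfl
    rw [ZMod.natCast_val, ZMod.cast_id]

lemma sum_ite_coord (n : ℕ) (hn : n ≤ k) (z : ZMod k) (f : ℕ → ZMod (MM k m)) :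
    (∑ i ∈ Finset.range n, if ((i : ℕ) : ZMod k) = z then f i else 0)
      = if z.val < n then f z.val else 0 := by
  have h : ∀ i ∈ Finset.range n,
      (if ((i : ℕ) : ZMod k) = z then f i else 0) = (if i = z.val then f i else 0) := by
    intro i hi
    rw [Finset.mem_range] at hi
    exact if_congr (natCast_eq_iff k i (lt_of_lt_of_le hi hn) z) rfl rfl
  rw [Finset.sum_congr rfl h, Finset.sum_ite_eq' (Finset.range n) z.val f]
  simp [Finset.mem_range]

lemma neg_natCast (s : ℕ) (h2 : s ≤ k) : (-(s : ZMod k)) = ((k - s : ℕ) : ZMod k) := by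
  have hk : ((k : ℕ) : ZMod k) = 0 := ZMod.natCast_self k
  rw [Nat.cast_sub h2, hk]
  ring

/-- the chain of deposits -/
def chn (vv : ZMod k → ZMod (MM k m)) (j : ZMod k) : ℕ → ZMod (MM k m)
  | 0 => vv (j + 1) - ((j.val * k : ℕ) : ZMod (MM k m))
  | (i+1) => vv (j + ((i+1 : ℕ) : ZMod k) + 1) - kap k m (chn vv j i)

/-- the special deposit -/
def tval (vv : ZMod k → ZMod (MM k m)) (j : ZMod k) : ZMod (MM k m) :=
  vv j - kap k m (chn k m vv j (k - 2))

/-- the word representing `g` -/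
def wordL (g : Gr k m) : List (Gr k m) :=
  bgen k m (g.r + 1) (tval k m g.v (g.r + 1))
    :: (List.range (k - 1)).map (fun i => agen k m (chn k m g.v (g.r + 1) i))

lemma arun_prod (x : ℕ → ZMod (MM k m)) (n : ℕ) :
    ((List.range n).map (fun i => agen k m (x i))).prod =
      ⟨fun c => ∑ i ∈ Finset.range n, (agen k m (x i)).v (c - ((i : ℕ) : ZMod k)),
        ((n : ℕ) : ZMod k)⟩ := by
  induction n with
  | zero =>
      rw [List.range_zero, List.map_nil, List.prod_nil]
      refine Gr.ext' k m (funext fun c => by simp [one_def]) (by simp [one_def])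
  | succ n ih =>
      rw [List.range_succ, List.map_append, List.prod_append, ih]
      rw [List.map_singleton, List.prod_singleton, mul_def]
      refine Gr.ext' k m ?_ ?_
      · funext c
        simp only [Pi.add_apply, shf]
        rw [Finset.sum_range_succ]
      · show ((n : ℕ) : ZMod k) + 1 = (((n + 1 : ℕ)) : ZMod k)
        push_cast
        ring

lemma wordL_length (hk : 3 ≤ k) (g : Gr k m) : (wordL k m g).length = k := by
  rw [wordL]
  simp only [List.length_cons, List.length_map, List.length_range]
  omega

lemma wordL_prod (hk : 3 ≤ k) (g : Gr k m) : (wordL k m g).prod = g := by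
  haveI : Fact (1 < k) := ⟨by omega⟩
  set j : ZMod k := g.r + 1 with hj
  rw [wordL, List.prod_cons, arun_prod, mul_def]
  refine Gr.ext' k m ?_ ?_
  · funext c
    show (bgen k m j (tval k m g.v j)).v c
        + (∑ i ∈ Finset.range (k-1),
            (agen k m (chn k m g.v j i)).v ((c - j) - ((i : ℕ) : ZMod k))) = g.v c
    have hexp : ∀ (i : ℕ) (y : ZMod (MM k m)),
        (agen k m y).v ((c - j) - ((i : ℕ) : ZMod k))
          = (if ((i : ℕ) : ZMod k) = c - j - 1 then y else 0)
            + (if ((i : ℕ) : ZMod k) = c - j - 2 then kap k m y else 0) := by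
      intro i y
      rw [show (agen k m y).v
        = Pi.single (1 : ZMod k) y + Pi.single (2 : ZMod k) (kap k m y) from rfl]
      rw [Pi.add_apply, Pi.single_apply, Pi.single_apply]
      congr 1
      · refine if_congr ?_ rfl rfl
        constructor <;> intro h <;> linear_combination -h
      · refine if_congr ?_ rfl rfl
        constructor <;> intro h <;> linear_combination -h
    have hbv : (bgen k m j (tval k m g.v j)).v c
        = (if c = j then tval k m g.v j else 0)
          + (if c = j + 1 then ((j.val * k : ℕ) : ZMod (MM k m)) else 0) := by
      rw [show (bgen k m j (tval k m g.v j)).v = Pi.single j (tval k m g.v j)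
        + Pi.single (j+1) ((j.val * k : ℕ) : ZMod (MM k m)) from rfl]
      rw [Pi.add_apply, Pi.single_apply, Pi.single_apply]
    rw [hbv, Finset.sum_congr rfl (fun i _ => hexp i _), Finset.sum_add_distrib,
      sum_ite_coord k m (k-1) (by omega) (c - j - 1) (fun i => chn k m g.v j i),
      sum_ite_coord k m (k-1) (by omega) (c - j - 2) (fun i => kap k m (chn k m g.v j i))]
    -- now case on u = (c - j).val
    have hu : c - j = (((c - j).val : ℕ) : ZMod k) := by
      rw [ZMod.natCast_val, ZMod.cast_id]
    set u := (c - j).val with hudef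
    have hult : u < k := ZMod.val_lt _
    have hcju : c = j + (u : ZMod k) := by rw [← hu]; ring
    match u, hult, hu, hcju with
    | 0, hult, hu, hcju =>
        have hc : c = j := by rw [hcju]; simp
        have h1 : ¬ (c = j + 1) := by
          rw [hc]
          intro h
          have : (0 : ZMod k) = 1 := by linear_combination h
          exact zero_ne_one this
        have h2 : c - j - 1 = ((k - 1 : ℕ) : ZMod k) := by
          rw [hc, ← neg_natCast k 1 (by omega)]
          push_cast; ring
        have h3 : c - j - 2 = ((k - 2 : ℕ) : ZMod k) := by
          rw [hc, ← neg_natCast k 2 (by omega)]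
          push_cast; ring
        rw [if_pos hc, if_neg h1, h2, h3,
          ZMod.val_natCast_of_lt (by omega), ZMod.val_natCast_of_lt (by omega),
          if_neg (by omega), if_pos (by omega)]
        rw [hc]
        show tval k m g.v j + 0 + (0 + kap k m (chn k m g.v j (k-2))) = g.v j
        rw [tval]
        ring
    | 1, hult, hu, hcju =>
        have hc : c = j + 1 := by rw [hcju]; push_cast; ring
        have h1 : ¬ (c = j) := by
          rw [hc]
          intro h
          have : (0 : ZMod k) = 1 := by linear_combination -h
          exact zero_ne_one this
        have h2 : c - j - 1 = ((0 : ℕ) : ZMod k) := by rw [hc]; push_cast; ring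
        have h3 : c - j - 2 = ((k - 1 : ℕ) : ZMod k) := by
          rw [hc, ← neg_natCast k 1 (by omega)]
          push_cast; ring
        rw [if_neg h1, if_pos hc, h2, h3,
          ZMod.val_natCast_of_lt (by omega), ZMod.val_natCast_of_lt (by omega),
          if_pos (by omega), if_neg (by omega)]
        rw [hc]
        show (0 : ZMod (MM k m)) + ((j.val * k : ℕ) : ZMod (MM k m))
            + (chn k m g.v j 0 + 0) = g.v (j + 1)
        rw [chn]
        ring
    | (s+2), hult, hu, hcju =>
        have h0 : ¬ (c = j) := by
          intro h
          have h' : j + (((s+2:ℕ)) : ZMod k) = j := hcju.symm.trans h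
          have hz : (((s+2 : ℕ)) : ZMod k) = (0 : ZMod k) := by linear_combination h'
          rw [natCast_eq_iff k _ hult] at hz
          simp [ZMod.val_zero] at hz
        have h1 : ¬ (c = j + 1) := by
          intro h
          have h' : j + (((s+2:ℕ)) : ZMod k) = j + 1 := hcju.symm.trans h
          have hz : (((s+2 : ℕ)) : ZMod k) = (1 : ZMod k) := by linear_combination h'
          rw [show (1 : ZMod k) = ((1:ℕ) : ZMod k) by push_cast; ring] at hz
          rw [natCast_eq_iff k _ hult] at hz
          rw [ZMod.val_natCast_of_lt (by omega)] at hz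
          omega
        have h2 : c - j - 1 = ((s + 1 : ℕ) : ZMod k) := by
          rw [hcju]; push_cast; ring
        have h3 : c - j - 2 = ((s : ℕ) : ZMod k) := by
          rw [hcju]; push_cast; ring
        rw [if_neg h0, if_neg h1, h2, h3,
          ZMod.val_natCast_of_lt (by omega), ZMod.val_natCast_of_lt (by omega),
          if_pos (by omega), if_pos (by omega)]
        rw [hcju]
        show (0 : ZMod (MM k m)) + 0 + (chn k m g.v j (s+1) + kap k m (chn k m g.v j s))
            = g.v (j + ((s+2 : ℕ) : ZMod k))
        rw [chn]
        have : j + (((s+1 : ℕ)) : ZMod k) + 1 = j + ((s+2:ℕ) : ZMod k) := by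
          push_cast; ring
        rw [this]
        ring
  · show j + ((k - 1 : ℕ) : ZMod k) = g.r
    have : ((k - 1 : ℕ) : ZMod k) = -1 := by
      rw [← neg_natCast k 1 (by omega)]
      push_cast; ring
    rw [this, hj]
    ring

end word

section cong
variable [NeZero k]

lemma cst_chn (vv : ZMod k → ZMod (MM k m)) (j : ZMod k) (i : ℕ) :
    cst k m (chn k m vv j i)
      = (∑ l ∈ Finset.range (i+1), cst k m (vv (j + ((l:ℕ) : ZMod k) + 1)))
        - ((j.val * k : ℕ) : ZMod (k*k)) - ((i : ℕ) : ZMod (k*k)) * k := by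
  induction i with
  | zero =>
      rw [chn, map_sub, cst_natCast, Finset.sum_range_one]
      push_cast
      ring
  | succ i ih =>
      rw [chn, map_sub, cst_kap, ih]
      conv_rhs => rw [Finset.sum_range_succ]
      push_cast
      ring

lemma sum_shift_index (f : ZMod k → ZMod (k*k)) (hk : 3 ≤ k) (j : ZMod k) :
    ∑ c, f c = f j + ∑ l ∈ Finset.range (k-1), f (j + ((l:ℕ) : ZMod k) + 1) := by
  have h1 : ∑ c, f c = ∑ l ∈ Finset.range k, f (j + ((l:ℕ):ZMod k)) := by
    refine (Finset.sum_bij' (fun (l : ℕ) (hl : l ∈ Finset.range k) => j + ((l:ℕ):ZMod k))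
      (fun (c : ZMod k) _ => (c - j).val) ?_ ?_ ?_ ?_ ?_).symm
    · intro l hl; exact Finset.mem_univ _
    · intro c hc; rw [Finset.mem_range]; exact ZMod.val_lt _
    · intro l hl
      rw [Finset.mem_range] at hl
      show ((j + ((l:ℕ):ZMod k)) - j).val = l
      rw [add_sub_cancel_left, ZMod.val_natCast, Nat.mod_eq_of_lt hl]
    · intro c hc
      show j + ((((c - j).val : ℕ)) : ZMod k) = c
      rw [ZMod.natCast_val, ZMod.cast_id]
      ring
    · intro l hl; rfl
  rw [h1, show Finset.range k = Finset.range ((k-1)+1) by rw [show (k-1)+1 = k by omega],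
    Finset.sum_range_succ']
  have h2 : ∀ l, f (j + (((l+1 : ℕ)):ZMod k)) = f (j + ((l:ℕ) : ZMod k) + 1) := by
    intro l
    congr 1
    push_cast
    ring
  rw [Finset.sum_congr rfl (fun l _ => h2 l)]
  have h3 : j + (((0:ℕ)):ZMod k) = j := by push_cast; ring
  rw [h3, add_comm]

lemma cst_tval (hk : 3 ≤ k) (g : Gr k m) (hg : psi k m g = 1) :
    cst k m (tval k m g.v (g.r + 1)) = 0 := by
  haveI : Fact (1 < k) := ⟨by omega⟩
  set j : ZMod k := g.r + 1 with hj
  have hv : cst k m (∑ c, g.v c) = ((g.r.val : ℕ) : ZMod (k*k)) * k := by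
    rw [psi_eq_one_iff] at hg
    exact hg
  have hsplit : ∑ c, cst k m (g.v c)
      = cst k m (g.v j) + ∑ l ∈ Finset.range (k-1), cst k m (g.v (j + ((l:ℕ) : ZMod k) + 1)) :=
    sum_shift_index k (fun c => cst k m (g.v c)) hk j
  have hmap : cst k m (∑ c, g.v c) = ∑ c, cst k m (g.v c) := map_sum _ _ _
  have hjval : ((j.val * k : ℕ) : ZMod (k*k)) = ((g.r.val + 1 : ℕ) : ZMod (k*k)) * k := by
    have h5 : j.val = (g.r.val + 1) % k := by
      rw [hj, ZMod.val_add, ZMod.val_one]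
    rw [h5]
    rw [show ((((g.r.val + 1) % k) * k : ℕ) : ZMod (k*k))
        = ((((g.r.val + 1) % k : ℕ)) : ZMod (k*k)) * ((k:ℕ) : ZMod (k*k)) by push_cast; ring]
    rw [modk_mul_k]
  have hk2 : ((k : ZMod (k*k))) * k = 0 := by
    rw [← Nat.cast_mul, ZMod.natCast_self]
  rw [tval, map_sub, cst_kap, cst_chn, show (k-2)+1 = k-1 by omega]
  rw [show ((k - 2 : ℕ) : ZMod (k*k)) = ((k:ℕ) : ZMod (k*k)) - 2 by
    push_cast [Nat.cast_sub (by omega : 2 ≤ k)]; ring]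
  rw [hjval]
  have hfin : cst k m (g.v j) + ∑ l ∈ Finset.range (k-1), cst k m (g.v (j + ((l:ℕ) : ZMod k) + 1))
      = ((g.r.val : ℕ) : ZMod (k*k)) * k := by
    rw [← hsplit, ← hmap, hv]
  push_cast at hfin ⊢
  linear_combination hfin - hk2
end cong

section sets
variable [NeZero k] [NeZero (MM k m)]

instance : DecidableEq (Gr k m) := fun a b =>
  decidable_of_iff (a.v = b.v ∧ a.r = b.r)
    ⟨fun ⟨h1, h2⟩ => Gr.ext' k m h1 h2, fun h => by subst h; exact ⟨rfl, rfl⟩⟩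

def Aset : Finset (Gr k m) := Finset.univ.image (fun x : ZMod (MM k m) => agen k m x)

def Bset : Finset (Gr k m) :=
  ((Finset.univ.filter (fun j : ZMod k => j ≠ 1)) ×ˢ Finset.Ioo 0 m).image
    (fun p => bgen k m p.1 ((k * k * p.2 : ℕ) : ZMod (MM k m)))

def Eset : Finset (Gr k m) :=
  (Finset.univ.filter (fun j : ZMod k => j ≠ 0 ∧ j ≠ 1)).image (fun j => bgen k m j 0)

def SGam : Finset (Gr k m) := Aset k m ∪ Bset k m ∪ Eset k m

def Ssym : Finset (Gr k m) := SGam k m ∪ (SGam k m).image (fun g => g⁻¹)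

lemma sgam_psi (hk : 3 ≤ k) : ∀ y ∈ SGam k m, psi k m y = 1 := by
  intro y hy
  rw [SGam, Finset.mem_union, Finset.mem_union] at hy
  rcases hy with (h | h) | h
  · rw [Aset, Finset.mem_image] at h
    obtain ⟨x, _, rfl⟩ := h
    exact psi_agen k m hk x
  · rw [Bset, Finset.mem_image] at h
    obtain ⟨p, _, rfl⟩ := h
    refine psi_bgen k m _ _ ?_
    rw [cst_natCast]
    push_cast
    rw [show ((k:ℕ) : ZMod (k*k)) * ((k:ℕ) : ZMod (k*k)) = ((k*k : ℕ) : ZMod (k*k)) by push_cast; ring,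
      ZMod.natCast_self]
    ring
  · rw [Eset, Finset.mem_image] at h
    obtain ⟨jj, _, rfl⟩ := h
    exact psi_bgen k m _ _ (map_zero _)

lemma ssym_psi (hk : 3 ≤ k) : ∀ y ∈ Ssym k m, psi k m y = 1 := by
  intro y hy
  rw [Ssym, Finset.mem_union] at hy
  rcases hy with h | h
  · exact sgam_psi k m hk y h
  · rw [Finset.mem_image] at h
    obtain ⟨x, hx, rfl⟩ := h
    rw [map_inv, sgam_psi k m hk x hx, inv_one]

lemma bgen_one_eq_agen (hk : 3 ≤ k) (t : ZMod (MM k m)) (ht : cst k m t = 0) :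
    bgen k m 1 t = agen k m t := by
  haveI : Fact (1 < k) := ⟨by omega⟩
  refine Gr.ext' k m ?_ rfl
  rw [show (bgen k m 1 t).v = Pi.single (1 : ZMod k) t
      + Pi.single ((1:ZMod k) + 1) (((1:ZMod k).val * k : ℕ) : ZMod (MM k m)) from rfl]
  rw [show (agen k m t).v = Pi.single (1 : ZMod k) t + Pi.single (2 : ZMod k) (kap k m t) from rfl]
  rw [one_add_one_eq_two]
  congr 1
  unfold kap
  rw [ht, sub_zero, ZMod.val_cast_of_lt (show k < k*k by nlinarith), ZMod.val_one, one_mul]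

lemma bgen_zero_zero (hk : 3 ≤ k) : bgen k m 0 0 = 1 := by
  refine Gr.ext' k m ?_ rfl
  rw [show (1 : Gr k m).v = 0 from rfl]
  rw [show (bgen k m 0 0).v = Pi.single (0 : ZMod k) (0 : ZMod (MM k m))
      + Pi.single ((0:ZMod k) + 1) (((0:ZMod k).val * k : ℕ) : ZMod (MM k m)) from rfl]
  rw [ZMod.val_zero, zero_mul, Nat.cast_zero, Pi.single_zero, Pi.single_zero, add_zero]

lemma bgen_mem (hk : 3 ≤ k) (j : ZMod k) (t : ZMod (MM k m)) (ht : cst k m t = 0) :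
    bgen k m j t ∈ SGam k m ∨ bgen k m j t = 1 := by
  by_cases hj1 : j = 1
  · left
    subst hj1
    rw [bgen_one_eq_agen k m hk t ht]
    rw [SGam]
    refine Finset.mem_union_left _ (Finset.mem_union_left _ ?_)
    rw [Aset, Finset.mem_image]
    exact ⟨t, Finset.mem_univ _, rfl⟩
  by_cases ht0 : t = 0
  · subst ht0
    by_cases hj0 : j = 0
    · right; subst hj0; exact bgen_zero_zero k m hk
    · left
      rw [SGam]
      refine Finset.mem_union_right _ ?_
      rw [Eset, Finset.mem_image]
      exact ⟨j, by simp [hj0, hj1], rfl⟩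
  · left
    rw [SGam]
    refine Finset.mem_union_left _ (Finset.mem_union_right _ ?_)
    have hvz : ((t.val : ℕ) : ZMod (k*k)) = 0 := by
      rw [ZMod.natCast_val]
      rw [show ((ZMod.cast t) : ZMod (k*k)) = cst k m t from (ZMod.castHom_apply t).symm]
      exact ht
    have hdvd : (k*k) ∣ t.val := by
      rwa [ZMod.natCast_eq_zero_iff] at hvz
    set s := t.val / (k*k) with hs
    have hkk : 0 < k * k := by positivity
    have hmul : k * k * s = t.val := Nat.mul_div_cancel' hdvd
    have hvlt : t.val < MM k m := ZMod.val_lt t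
    have hslt : s < m := by
      have h1 : k*k*s < k*k*m := by rw [hmul]; exact hvlt
      exact lt_of_mul_lt_mul_left h1 (Nat.zero_le _)
    have hs0 : 0 < s := by
      rcases Nat.eq_zero_or_pos s with h | h
      · exfalso
        apply ht0
        have hv0 : t.val = 0 := by rw [← hmul, h, Nat.mul_zero]
        exact (ZMod.val_eq_zero t).mp hv0
      · exact h
    rw [Bset, Finset.mem_image]
    refine ⟨(j, s), ?_, ?_⟩
    · rw [Finset.mem_product]
      constructor
      · simp [hj1]
      · rw [Finset.mem_Ioo]; exact ⟨hs0, hslt⟩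
    · show bgen k m j ((k * k * s : ℕ) : ZMod (MM k m)) = bgen k m j t
      congr 1
      rw [hmul, ZMod.natCast_val, ZMod.cast_id]

end sets

section cover
variable [NeZero k] [NeZero (MM k m)]

lemma agen_in_sgam (x : ZMod (MM k m)) : agen k m x ∈ SGam k m := by
  refine Finset.mem_union_left _ (Finset.mem_union_left _ ?_)
  rw [Aset, Finset.mem_image]
  exact ⟨x, Finset.mem_univ _, rfl⟩

lemma coverGam (hk : 3 ≤ k) (g : Gr k m) (hg : psi k m g = 1) :
    ∃ L : List (Gr k m), (∀ y ∈ L, y ∈ SGam k m) ∧ L.length ≤ k ∧ L.prod = g := by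
  have hcst := cst_tval k m hk g hg
  rcases bgen_mem k m hk (g.r+1) (tval k m g.v (g.r+1)) hcst with hmem | hone
  · refine ⟨wordL k m g, ?_, le_of_eq (wordL_length k m hk g), wordL_prod k m hk g⟩
    intro y hy
    rw [wordL, List.mem_cons] at hy
    rcases hy with rfl | hy
    · exact hmem
    · rw [List.mem_map] at hy
      obtain ⟨i, _, rfl⟩ := hy
      exact agen_in_sgam k m _
  · refine ⟨(List.range (k-1)).map (fun i => agen k m (chn k m g.v (g.r+1) i)), ?_, ?_, ?_⟩
    · intro y hy
      rw [List.mem_map] at hy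
      obtain ⟨i, _, rfl⟩ := hy
      exact agen_in_sgam k m _
    · rw [List.length_map, List.length_range]
      omega
    · have hw := wordL_prod k m hk g
      rw [wordL, List.prod_cons, hone, one_mul] at hw
      exact hw

lemma ssym_inv (y : Gr k m) (hy : y ∈ Ssym k m) : y⁻¹ ∈ Ssym k m := by
  rw [Ssym, Finset.mem_union] at hy ⊢
  rcases hy with h | h
  · right
    rw [Finset.mem_image]
    exact ⟨y, h, rfl⟩
  · left
    rw [Finset.mem_image] at h
    obtain ⟨x, hx, rfl⟩ := h
    rwa [inv_inv]

lemma one_ne_two (hk : 3 ≤ k) : (1 : ZMod k) ≠ 2 := by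
  haveI : Fact (1 < k) := ⟨by omega⟩
  intro h
  have h2 : (2 : ZMod k) = ((2:ℕ) : ZMod k) := by push_cast; ring
  have h1 : (1 : ZMod k) = ((1:ℕ) : ZMod k) := by push_cast; ring
  rw [h1, h2, natCast_eq_iff k 1 (by omega), ZMod.val_cast_of_lt (by omega)] at h
  omega

lemma one_notin_sgam (hk : 3 ≤ k) (hm : 1 ≤ m) : (1 : Gr k m) ∉ SGam k m := by
  haveI : Fact (1 < k) := ⟨by omega⟩
  intro h
  rw [SGam, Finset.mem_union, Finset.mem_union] at h
  have hr : (1 : Gr k m).r = 0 := rfl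
  rcases h with (h | h) | h
  · rw [Aset, Finset.mem_image] at h
    obtain ⟨x, _, hx⟩ := h
    have : (agen k m x).r = (0 : ZMod k) := by rw [hx]; rfl
    have h10 : (1 : ZMod k) = 0 := this
    exact one_ne_zero h10
  · rw [Bset, Finset.mem_image] at h
    obtain ⟨p, hp, hx⟩ := h
    rw [Finset.mem_product, Finset.mem_filter, Finset.mem_Ioo] at hp
    by_cases hj0 : p.1 = 0
    · -- vector at coordinate 0 equals the positive cast
      have hv := congrArg Gr.v hx
      have hval : (bgen k m p.1 ((k * k * p.2 : ℕ) : ZMod (MM k m))).v 0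
          = ((k * k * p.2 : ℕ) : ZMod (MM k m)) := by
        rw [show (bgen k m p.1 ((k * k * p.2 : ℕ) : ZMod (MM k m))).v
            = Pi.single p.1 ((k * k * p.2 : ℕ) : ZMod (MM k m))
              + Pi.single (p.1 + 1) ((p.1.val * k : ℕ) : ZMod (MM k m)) from rfl]
        rw [Pi.add_apply, hj0]
        rw [Pi.single_eq_same, Pi.single_eq_of_ne ?_, add_zero]
        intro hcon
        have : (0 : ZMod k) = 1 := by linear_combination hcon
        exact zero_ne_one this
      have hzero : ((k * k * p.2 : ℕ) : ZMod (MM k m)) = 0 := by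
        rw [← hval, hv]
        rfl
      rw [ZMod.natCast_eq_zero_iff] at hzero
      have hkk : 0 < k * k := Nat.mul_pos (by omega) (by omega)
      have hle := Nat.le_of_dvd (Nat.mul_pos hkk hp.2.1) hzero
      have : k * k * p.2 < k * k * m := (Nat.mul_lt_mul_left hkk).mpr hp.2.2
      have hMMeq : MM k m = k * k * m := rfl
      omega
    · have : (bgen k m p.1 ((k * k * p.2 : ℕ) : ZMod (MM k m))).r = (0 : ZMod k) := by
        rw [hx]; rfl
      exact hj0 this
  · rw [Eset, Finset.mem_image] at h
    obtain ⟨j, hj, hx⟩ := h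
    rw [Finset.mem_filter] at hj
    have : (bgen k m j 0).r = (0 : ZMod k) := by rw [hx]; rfl
    exact hj.2.1 this

lemma one_notin_ssym (hk : 3 ≤ k) (hm : 1 ≤ m) : (1 : Gr k m) ∉ Ssym k m := by
  intro h
  rw [Ssym, Finset.mem_union] at h
  rcases h with h | h
  · exact one_notin_sgam k m hk hm h
  · rw [Finset.mem_image] at h
    obtain ⟨x, hx, hinv⟩ := h
    have : x = 1 := by
      have := congrArg (fun z => z⁻¹) hinv
      simpa using this
    rw [this] at hx
    exact one_notin_sgam k m hk hm hx

lemma agen_injective (hk : 3 ≤ k) : Function.Injective (fun x => agen k m x) := by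
  intro x y hxy
  have hv := congrArg Gr.v hxy
  have h1 : ∀ z : ZMod (MM k m), (agen k m z).v 1 = z := by
    intro z
    rw [show (agen k m z).v = Pi.single (1 : ZMod k) z + Pi.single (2 : ZMod k) (kap k m z) from rfl]
    rw [Pi.add_apply, Pi.single_eq_same,
      Pi.single_eq_of_ne (show (1:ZMod k) ≠ 2 from one_ne_two k hk), add_zero]
  have := congrFun hv 1
  rwa [h1, h1] at this

lemma ssym_card_lower (hk : 3 ≤ k) : MM k m ≤ (Ssym k m).card := by
  have h1 : (Aset k m).card = MM k m := by
    rw [Aset, Finset.card_image_of_injective _ (agen_injective k m hk), Finset.card_univ,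
      ZMod.card]
  rw [← h1]
  apply Finset.card_le_card
  intro y hy
  rw [Ssym, Finset.mem_union]
  left
  exact Finset.mem_union_left _ (Finset.mem_union_left _ hy)

lemma ssym_card_upper (hk : 3 ≤ k) : (Ssym k m).card ≤ 2 * (MM k m + k * m + k) := by
  have hA : (Aset k m).card ≤ MM k m := by
    rw [Aset]
    calc (Finset.univ.image (fun x : ZMod (MM k m) => agen k m x)).card
        ≤ (Finset.univ : Finset (ZMod (MM k m))).card := Finset.card_image_le
      _ = MM k m := by rw [Finset.card_univ, ZMod.card]
  have hB : (Bset k m).card ≤ k * m := by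
    rw [Bset]
    calc (Finset.image _ _).card
        ≤ ((Finset.univ.filter (fun j : ZMod k => j ≠ 1)) ×ˢ Finset.Ioo 0 m).card :=
          Finset.card_image_le
      _ = (Finset.univ.filter (fun j : ZMod k => j ≠ 1)).card * (Finset.Ioo 0 m).card :=
          Finset.card_product _ _
      _ ≤ k * m := by
          apply Nat.mul_le_mul
          · calc (Finset.univ.filter (fun j : ZMod k => j ≠ 1)).card
                ≤ (Finset.univ : Finset (ZMod k)).card := Finset.card_filter_le _ _
              _ = k := by rw [Finset.card_univ, ZMod.card]
          · rw [Nat.card_Ioo]; omega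
  have hE : (Eset k m).card ≤ k := by
    rw [Eset]
    calc (Finset.image _ _).card
        ≤ (Finset.univ.filter (fun j : ZMod k => j ≠ 0 ∧ j ≠ 1)).card := Finset.card_image_le
      _ ≤ (Finset.univ : Finset (ZMod k)).card := Finset.card_filter_le _ _
      _ = k := by rw [Finset.card_univ, ZMod.card]
  have hSG : (SGam k m).card ≤ MM k m + k * m + k := by
    calc (SGam k m).card ≤ (Aset k m ∪ Bset k m).card + (Eset k m).card :=
          Finset.card_union_le _ _
      _ ≤ (Aset k m).card + (Bset k m).card + (Eset k m).card := by
          have := Finset.card_union_le (Aset k m) (Bset k m)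
          omega
      _ ≤ MM k m + k * m + k := by omega
  calc (Ssym k m).card ≤ (SGam k m).card + ((SGam k m).image (fun g => g⁻¹)).card :=
        Finset.card_union_le _ _
    _ ≤ (SGam k m).card + (SGam k m).card := by
        have := Finset.card_image_le (s := SGam k m) (f := fun g => g⁻¹)
        omega
    _ ≤ 2 * (MM k m + k * m + k) := by omega

end cover

section card
variable [NeZero k] [NeZero (MM k m)]

lemma card_gr : Nat.card (Gr k m) = (MM k m)^k * k := by
  rw [Nat.card_congr (grEquiv k m), Nat.card_prod, Nat.card_fun, Nat.card_zmod, Nat.card_zmod]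

lemma psi_surjective : Function.Surjective (psi k m) := by
  intro y
  set w : ZMod k → ZMod (MM k m)
    := Pi.single (1 : ZMod k) (((Multiplicative.toAdd y).val : ℕ) : ZMod (MM k m)) with hw
  refine ⟨⟨w, 0⟩, ?_⟩
  rw [psi_apply]
  have h1 : (Gr.mk w (0 : ZMod k)).v = w := rfl
  have h2 : (Gr.mk w (0 : ZMod k)).r = 0 := rfl
  rw [h1, h2]
  have hs : ∑ c, w c = (((Multiplicative.toAdd y).val : ℕ) : ZMod (MM k m)) := by
    rw [hw]; exact sum_single k m _ _
  rw [hs, cst_natCast, ZMod.val_zero, ZMod.natCast_val, ZMod.cast_id]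
  simp

lemma card_ker : (k * k) * Nat.card (psi k m).ker = (MM k m)^k * k := by
  have h1 := Subgroup.card_eq_card_quotient_mul_card_subgroup (psi k m).ker
  have h2 : Nat.card (Gr k m ⧸ (psi k m).ker) = Nat.card (psi k m).range :=
    Nat.card_congr (QuotientGroup.quotientKerEquivRange (psi k m)).toEquiv
  have h3 : (psi k m).range = ⊤ := MonoidHom.range_eq_top.mpr (psi_surjective k m)
  have h4 : Nat.card (psi k m).range = k * k := by
    rw [h3, Subgroup.card_top, Nat.card_congr (Multiplicative.ofAdd (α := ZMod (k*k))).symm,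
      Nat.card_zmod]
  rw [card_gr] at h1
  rw [h2, h4] at h1
  omega

end card

section reals

lemma logb_le_four_sqrt (x : ℝ) (hx : 1 ≤ x) : Real.logb 2 x ≤ 4 * Real.sqrt x := by
  have hsp : 0 < Real.sqrt x := Real.sqrt_pos.mpr (by linarith)
  have h1 : Real.log x = 2 * Real.log (Real.sqrt x) := by
    rw [Real.log_sqrt (by linarith)]; ring
  have h2 : Real.log (Real.sqrt x) ≤ Real.sqrt x - 1 :=
    Real.log_le_sub_one_of_pos hsp
  have hlog : Real.log x ≤ 2 * Real.sqrt x := by nlinarith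
  rw [Real.logb, div_le_iff₀ (Real.log_pos (by norm_num))]
  nlinarith [Real.log_two_gt_d9, Real.log_nonneg hx, Real.sqrt_nonneg x]

lemma keybound (kr mr M dr L1 : ℝ) (hk : 3 ≤ kr) (hm : 36*kr^2 + 2 ≤ mr) (hM : M = kr^2*mr)
    (hdup : dr ≤ 2*M + 2*kr*mr + 2*kr) (hL1 : L1 ≤ 4*Real.sqrt (2*M)) :
    (kr/(2*kr+4)) * (dr + kr*L1) ≤ M := by
  have hmr0 : 0 < mr := by nlinarith
  have ht : Real.sqrt mr * Real.sqrt mr = mr := Real.mul_self_sqrt (by linarith)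
  have htn : 0 ≤ Real.sqrt mr := Real.sqrt_nonneg _
  have ht6 : 6*kr ≤ Real.sqrt mr := by
    rw [show (6:ℝ)*kr = Real.sqrt ((6*kr)^2) from (Real.sqrt_sq (by nlinarith)).symm]
    exact Real.sqrt_le_sqrt (by nlinarith)
  have hs : Real.sqrt (2*M) ≤ 2*kr*Real.sqrt mr := by
    rw [show 2*kr*Real.sqrt mr = Real.sqrt ((2*kr*Real.sqrt mr)^2) from
      (Real.sqrt_sq (by nlinarith)).symm]
    apply Real.sqrt_le_sqrt
    nlinarith
  have hL1' : L1 ≤ 8*kr*Real.sqrt mr := by nlinarith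
  rw [div_mul_eq_mul_div, div_le_iff₀ (by nlinarith : (0:ℝ) < 2*kr+4)]
  -- kr * (dr + kr*L1) ≤ M * (2*kr + 4)
  have key : 1 + 4*Real.sqrt mr * kr ≤ mr := by nlinarith
  nlinarith [mul_nonneg (mul_nonneg (by nlinarith : (0:ℝ) ≤ kr) (by nlinarith : (0:ℝ) ≤ kr))
    (by nlinarith : (0:ℝ) ≤ kr), sq_nonneg kr, mul_pos hmr0 hmr0]

end reals

end CayCon

open Real

set_option maxHeartbeats 1000000 in
/-- Corollary 6: for any `k ≥ 3` there are arbitrarily large degrees `d` for which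
there is a Cayley graph of diameter at most `k`, degree `d`, and order at least
`(1/k)·((k/(2k+4))·(d + k·log₂(d/2) − log₂log₂ d − log₂(8k²)))^k`. -/
theorem cayley_graph_second_construction (k : ℕ) (hk : 3 ≤ k) (N : ℕ) :
    ∃ d : ℕ, N ≤ d ∧
      ∃ (G : Type) (_ : Group G) (_ : Fintype G) (S : Finset G),
        S.card = d ∧
        (1 : G) ∉ S ∧
        (∀ s ∈ S, s⁻¹ ∈ S) ∧
        Subgroup.closure (S : Set G) = ⊤ ∧
        (∀ g : G, ∃ l : List G, (∀ x ∈ l, x ∈ S) ∧ l.length ≤ k ∧ l.prod = g) ∧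
        (1 / (k : ℝ)) * (((k : ℝ) / (2 * k + 4)) *
            ((d : ℝ) + k * Real.logb 2 ((d : ℝ) / 2)
              - Real.logb 2 (Real.logb 2 (d : ℝ))
              - Real.logb 2 (8 * (k : ℝ) ^ 2))) ^ k ≤ (Nat.card G : ℝ) := by
  classical
  have hk0 : k ≠ 0 := by omega
  haveI : NeZero k := ⟨hk0⟩
  haveI : Fact (1 < k) := ⟨by omega⟩
  set m : ℕ := N + 36 * k * k + 2 with hmdef
  have hMMeq : CayCon.MM k m = k * k * m := rfl
  haveI : NeZero (CayCon.MM k m) :=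
    ⟨by rw [hMMeq]; exact Nat.mul_ne_zero (Nat.mul_ne_zero hk0 hk0) (by omega)⟩
  set K : Subgroup (CayCon.Gr k m) := (CayCon.psi k m).ker with hKdef
  haveI hdec : DecidablePred (· ∈ K) := fun g =>
    decidable_of_iff (CayCon.psi k m g = 1) MonoidHom.mem_ker.symm
  haveI hfin : Fintype ↥K := Subtype.fintype _
  set SK : Finset ↥K := (CayCon.Ssym k m).subtype (· ∈ K) with hSKdef
  have hsubK : ∀ y ∈ CayCon.Ssym k m, y ∈ K := fun y hy =>
    MonoidHom.mem_ker.mpr (CayCon.ssym_psi k m hk y hy)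
  have hSKcard : SK.card = (CayCon.Ssym k m).card := by
    rw [hSKdef, Finset.card_subtype, Finset.filter_true_of_mem hsubK]
  have hd_low : CayCon.MM k m ≤ SK.card := by
    rw [hSKcard]; exact CayCon.ssym_card_lower k m hk
  have hd_up : SK.card ≤ 2 * (CayCon.MM k m + k * m + k) := by
    rw [hSKcard]; exact CayCon.ssym_card_upper k m hk
  have hNd : N ≤ SK.card := by
    have h1 : m ≤ CayCon.MM k m := by
      rw [hMMeq]
      calc m = 1 * m := (one_mul m).symm
        _ ≤ k * k * m := Nat.mul_le_mul_right m (by nlinarith)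
    omega
  -- the diameter property
  have hdiam : ∀ g : ↥K, ∃ l : List ↥K, (∀ x ∈ l, x ∈ SK) ∧ l.length ≤ k ∧ l.prod = g := by
    intro g
    have hg : CayCon.psi k m (g : CayCon.Gr k m) = 1 := MonoidHom.mem_ker.mp g.2
    obtain ⟨L, hLmem, hLlen, hLprod⟩ := CayCon.coverGam k m hk (g : CayCon.Gr k m) hg
    refine ⟨L.pmap (fun y hy =>
      (⟨y, MonoidHom.mem_ker.mpr (CayCon.sgam_psi k m hk y hy)⟩ : ↥K)) hLmem, ?_, ?_, ?_⟩
    · intro x hx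
      rw [List.mem_pmap] at hx
      obtain ⟨y, hy, rfl⟩ := hx
      rw [hSKdef, Finset.mem_subtype]
      show y ∈ CayCon.Ssym k m
      rw [CayCon.Ssym, Finset.mem_union]
      exact Or.inl (hLmem y hy)
    · rw [List.length_pmap]; exact hLlen
    · apply Subtype.ext
      rw [Subgroup.val_list_prod, List.map_pmap]
      have : (L.pmap (fun y hy => ((⟨y,
          MonoidHom.mem_ker.mpr (CayCon.sgam_psi k m hk y hy)⟩ : ↥K) : CayCon.Gr k m)) hLmem)
          = L := by
        rw [List.pmap_eq_map (p := fun y => y ∈ CayCon.SGam k m) (f := fun y => y) (l := L) hLmem]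
        simp
      rw [this, hLprod]
  have hclosure : Subgroup.closure (SK : Set ↥K) = ⊤ := by
    rw [Subgroup.eq_top_iff']
    intro g
    obtain ⟨l, hmem, _, hprod⟩ := hdiam g
    rw [← hprod]
    exact Subgroup.list_prod_mem _ (fun x hx => Subgroup.subset_closure (hmem x hx))
  have hone : (1 : ↥K) ∉ SK := by
    intro h
    rw [hSKdef, Finset.mem_subtype] at h
    exact CayCon.one_notin_ssym k m hk (by omega) h
  have hsym : ∀ s ∈ SK, s⁻¹ ∈ SK := by
    intro s hs
    rw [hSKdef, Finset.mem_subtype] at hs ⊢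
    exact CayCon.ssym_inv k m _ hs
  -- cardinality of the group
  have hcardK : ((CayCon.MM k m : ℝ))^k = (k : ℝ) * (Nat.card ↥K : ℝ) := by
    have h := CayCon.card_ker k m
    rw [← hKdef] at h
    have h' : ((k:ℝ))*(k:ℝ)*(Nat.card ↥K : ℝ) = (CayCon.MM k m : ℝ)^k * (k:ℝ) := by
      exact_mod_cast congrArg (fun n : ℕ => (n : ℝ)) h
    have hkne : (k : ℝ) ≠ 0 := Nat.cast_ne_zero.mpr hk0
    refine mul_right_cancel₀ hkne ?_
    linear_combination -h'
  -- real estimates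
  refine ⟨SK.card, hNd, ↥K, inferInstance, hfin, SK, rfl, hone, hsym, hclosure, hdiam, ?_⟩
  set dr : ℝ := (SK.card : ℝ) with hdr
  set kr : ℝ := (k : ℝ) with hkr
  set mr : ℝ := (m : ℝ) with hmr
  set Mr : ℝ := (CayCon.MM k m : ℝ) with hMrdef
  have hkr3 : (3:ℝ) ≤ kr := by rw [hkr]; exact_mod_cast hk
  have hmr36 : 36*kr^2 + 2 ≤ mr := by
    have hNat : 36*k*k + 2 ≤ m := by omega
    have h1 : ((36*k*k + 2 : ℕ) : ℝ) ≤ (m:ℝ) := Nat.cast_le.mpr hNat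
    rw [hkr, hmr]
    calc 36*(k:ℝ)^2 + 2 = ((36*k*k+2 : ℕ) : ℝ) := by push_cast; ring
      _ ≤ (m:ℝ) := h1
  have hMr : Mr = kr^2*mr := by
    rw [hMrdef, hkr, hmr, hMMeq]
    push_cast
    ring
  have hdrlow : Mr ≤ dr := by
    rw [hMrdef, hdr]
    exact_mod_cast hd_low
  have hdrup : dr ≤ 2*Mr + 2*kr*mr + 2*kr := by
    have h2 : (SK.card : ℝ) ≤ ((2 * (CayCon.MM k m + k * m + k) : ℕ) : ℝ) := Nat.cast_le.mpr hd_up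
    have h3 : ((2 * (CayCon.MM k m + k * m + k) : ℕ) : ℝ)
        = 2 * ((CayCon.MM k m : ℝ) + (k:ℝ)*(m:ℝ) + (k:ℝ)) := by
      rw [Nat.cast_mul, Nat.cast_add, Nat.cast_add, Nat.cast_mul]
      norm_num
    rw [hdr, hMrdef, hkr, hmr]
    rw [h3] at h2
    linarith
  have hmr2 : (2:ℝ) ≤ mr := by nlinarith
  have hkr2 : (9:ℝ) ≤ kr^2 := by nlinarith
  have hmr326 : (326:ℝ) ≤ mr := by nlinarith
  have hMr64 : (64:ℝ) ≤ Mr := by nlinarith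
  have hdr64 : (64:ℝ) ≤ dr := by linarith
  have hsqd : Real.sqrt dr * Real.sqrt dr = dr := Real.mul_self_sqrt (by linarith)
  have hsq8 : (8:ℝ) ≤ Real.sqrt dr := by
    rw [show (8:ℝ) = Real.sqrt (8^2) from (Real.sqrt_sq (by norm_num)).symm]
    exact Real.sqrt_le_sqrt (by nlinarith)
  have hlogd4 : Real.logb 2 dr ≤ 4 * Real.sqrt dr := CayCon.logb_le_four_sqrt dr (by linarith)
  have hlogd_half : Real.logb 2 dr ≤ dr/2 := by nlinarith
  have h1logd : (1:ℝ) ≤ Real.logb 2 dr := by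
    rw [show (1:ℝ) = Real.logb 2 2 from (Real.logb_self_eq_one one_lt_two).symm]
    exact Real.logb_le_logb_of_le one_lt_two (by norm_num) (by linarith)
  have hL2low : 0 ≤ Real.logb 2 (Real.logb 2 dr) := Real.logb_nonneg one_lt_two h1logd
  have hL2up : Real.logb 2 (Real.logb 2 dr) ≤ dr/2 := by
    have h1 : Real.logb 2 (Real.logb 2 dr) ≤ Real.logb 2 dr :=
      Real.logb_le_logb_of_le one_lt_two (by linarith) (by nlinarith)
    linarith
  have hL3low : 0 ≤ Real.logb 2 (8*kr^2) := Real.logb_nonneg one_lt_two (by nlinarith)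
  have hL3up : Real.logb 2 (8*kr^2) ≤ dr/2 := by
    have h1 : Real.logb 2 (8*kr^2) ≤ Real.logb 2 dr :=
      Real.logb_le_logb_of_le one_lt_two (by nlinarith) (by nlinarith)
    linarith
  have hL1low : 0 ≤ Real.logb 2 (dr/2) := Real.logb_nonneg one_lt_two (by linarith)
  have hL1up : Real.logb 2 (dr/2) ≤ 4*Real.sqrt (2*Mr) := by
    have harg : dr/2 ≤ 2*Mr := by nlinarith
    have h1 : Real.logb 2 (dr/2) ≤ Real.logb 2 (2*Mr) :=
      Real.logb_le_logb_of_le one_lt_two (by linarith) harg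
    have h2 : Real.logb 2 (2*Mr) ≤ 4*Real.sqrt (2*Mr) :=
      CayCon.logb_le_four_sqrt _ (by nlinarith)
    linarith
  set X : ℝ := dr + kr * Real.logb 2 (dr/2) - Real.logb 2 (Real.logb 2 dr)
    - Real.logb 2 (8*kr^2) with hX
  have hX0 : 0 ≤ X := by
    have : 0 ≤ kr * Real.logb 2 (dr/2) := mul_nonneg (by linarith) hL1low
    rw [hX]; linarith
  have hXup : X ≤ dr + kr * Real.logb 2 (dr/2) := by rw [hX]; linarith
  have hc0 : 0 ≤ kr/(2*kr+4) := by positivity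
  have hcXM : (kr/(2*kr+4)) * X ≤ Mr := by
    have h1 : (kr/(2*kr+4)) * X ≤ (kr/(2*kr+4)) * (dr + kr * Real.logb 2 (dr/2)) :=
      mul_le_mul_of_nonneg_left hXup hc0
    have h2 := CayCon.keybound kr mr Mr dr (Real.logb 2 (dr/2)) hkr3 hmr36 hMr hdrup hL1up
    linarith
  have hpow : ((kr/(2*kr+4)) * X)^k ≤ Mr^k :=
    pow_le_pow_left₀ (mul_nonneg hc0 hX0) hcXM k
  have hfinal : (1/kr) * ((kr/(2*kr+4)) * X)^k ≤ (Nat.card ↥K : ℝ) := by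
    have hkrpos : (0:ℝ) < kr := by linarith
    have h1 : (1/kr) * ((kr/(2*kr+4)) * X)^k ≤ (1/kr) * Mr^k :=
      mul_le_mul_of_nonneg_left hpow (by positivity)
    have h2 : (1/kr) * Mr^k = (Nat.card ↥K : ℝ) := by
      rw [hcardK]
      field_simp
    linarith
  exact hfinal
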